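/- Let T* > 0 and let w : [0,1] × ℝ × [0,T*) → ℝ be a C² solution of -∂ₜw - η∂_ξw + w²∂²_{ηη}w = 0 with ∂_η w|_{η=0} = 0 and w|_{η=1} = 0. Suppose c(1-η) ≤ w ≤ C(1-η) on {t=0} ∪ {η=1} and as |ξ| → ∞ (uniformly), and suppose w ≤ C(1-η) everywhere on [0,1]×ℝ×[0,T*). Then there exists c₁ > 0 depending only on c, C, T* such that w(η,ξ,t) ≥ c₁(1-η) for all (η,ξ,t) ∈ [0,1] × ℝ × [0,T*). -/

import Mathlib

open Set Filter

private lemma deriv_nonneg_of_min_left {f : ℝ → ℝ} {x b d : ℝ} (hxb : x < b)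
    (hf : HasDerivAt f d x) (hmin : ∀ y ∈ Set.Icc x b, f x ≤ f y) : 0 ≤ d := by
  have h := hasDerivAt_iff_tendsto_slope.mp hf
  have h' : Tendsto (slope f x) (nhdsWithin x (Ioi x)) (nhds d) :=
    h.mono_left (nhdsWithin_mono x (fun y hy => ne_of_gt hy))
  refine ge_of_tendsto h' ?_
  filter_upwards [Ioc_mem_nhdsGT_of_mem (left_mem_Ico.mpr hxb)] with y hy
  have h1 : f x ≤ f y := hmin y ⟨le_of_lt hy.1, hy.2⟩
  have h2 : 0 < y - x := by linarith [hy.1]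
  rw [slope_def_field]
  exact div_nonneg (by linarith) (le_of_lt h2)

private lemma deriv_nonpos_of_min_right {f : ℝ → ℝ} {x a d : ℝ} (hax : a < x)
    (hf : HasDerivAt f d x) (hmin : ∀ y ∈ Set.Icc a x, f x ≤ f y) : d ≤ 0 := by
  have h := hasDerivAt_iff_tendsto_slope.mp hf
  have h' : Tendsto (slope f x) (nhdsWithin x (Iio x)) (nhds d) :=
    h.mono_left (nhdsWithin_mono x (fun y hy => ne_of_lt hy))
  refine le_of_tendsto h' ?_
  filter_upwards [Ico_mem_nhdsLT_of_mem (right_mem_Ioc.mpr hax)] with y hy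
  have h1 : f x ≤ f y := hmin y ⟨hy.1, le_of_lt hy.2⟩
  have h2 : y - x < 0 := by linarith [hy.2]
  rw [slope_def_field]
  exact div_nonpos_of_nonneg_of_nonpos (by linarith) (le_of_lt h2)

private lemma second_deriv_nonneg_of_isLocalMin {f : ℝ → ℝ} {x : ℝ}
    (hf : ContDiff ℝ 2 f) (hmin : IsLocalMin f x) : 0 ≤ deriv (deriv f) x := by
  by_contra hneg
  push_neg at hneg
  have hf1 : ContDiff ℝ 1 (deriv f) := by
    have := (contDiff_succ_iff_deriv (n := 1)).mp (by exact_mod_cast hf)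
    exact this.2.2
  have hd : HasDerivAt (deriv f) (deriv (deriv f) x) x :=
    ((hf1.differentiable one_ne_zero) x).hasDerivAt
  have hzero : deriv f x = 0 := hmin.deriv_eq_zero
  have hslope := hasDerivAt_iff_tendsto_slope.mp hd
  have h' : Tendsto (slope (deriv f) x) (nhdsWithin x (Ioi x)) (nhds (deriv (deriv f) x)) :=
    hslope.mono_left (nhdsWithin_mono x (fun y hy => ne_of_gt hy))
  have hev : ∀ᶠ y in nhdsWithin x (Ioi x), slope (deriv f) x y < 0 :=
    h'.eventually_lt_const hneg
  have hev2 : ∀ᶠ y in nhdsWithin x (Ioi x), deriv f y < 0 := by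
    filter_upwards [hev, self_mem_nhdsWithin] with y hy hy'
    rw [slope_def_field, hzero, sub_zero] at hy
    have h2 : 0 < y - x := sub_pos.mpr hy'
    by_contra hge
    push_neg at hge
    exact absurd hy (not_lt.mpr (div_nonneg hge (le_of_lt h2)))
  have hev3 : ∀ᶠ y in nhdsWithin x (Ioi x), f x ≤ f y :=
    hmin.filter_mono nhdsWithin_le_nhds
  obtain ⟨u, hu, hsub⟩ := mem_nhdsGT_iff_exists_Ioo_subset.mp (hev2.and hev3)
  set z := (x + u) / 2 with hz
  have hxu : x < u := hu
  have hxz : x < z := by simp [hz]; linarith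
  have hzu : z < u := by simp [hz]; linarith
  have hanti : StrictAntiOn f (Icc x z) := by
    apply strictAntiOn_of_deriv_neg (convex_Icc _ _) (hf.continuous.continuousOn)
    intro y hy
    rw [interior_Icc] at hy
    exact (hsub ⟨hy.1, lt_trans hy.2 hzu⟩).1
  have h1 : f z < f x := hanti (left_mem_Icc.mpr (le_of_lt hxz)) (right_mem_Icc.mpr (le_of_lt hxz)) hxz
  have h2 : f x ≤ f z := (hsub ⟨hxz, hzu⟩).2
  linarith

private lemma phi_hasDeriv (e : ℝ) :
    HasDerivAt (fun e : ℝ => (1 - e) * Real.exp (2 * e)) ((1 - 2*e) * Real.exp (2*e)) e := by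
  have h1 : HasDerivAt (fun e : ℝ => 1 - e) (-1) e := by
    exact (hasDerivAt_id' e).const_sub 1
  have h2 : HasDerivAt (fun e : ℝ => Real.exp (2 * e)) (Real.exp (2*e) * 2) e := by
    simpa using ((hasDerivAt_id e).const_mul 2).exp
  have := h1.mul h2
  exact this.congr_deriv (by ring)

private lemma phi'_hasDeriv (e : ℝ) :
    HasDerivAt (fun e : ℝ => (1 - 2*e) * Real.exp (2 * e)) (-4*e * Real.exp (2*e)) e := by
  have h1 : HasDerivAt (fun e : ℝ => 1 - 2*e) (-2) e := by
    exact (((hasDerivAt_id' e).const_mul (2:ℝ)).const_sub (1:ℝ)).congr_deriv (by ring)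
  have h2 : HasDerivAt (fun e : ℝ => Real.exp (2 * e)) (Real.exp (2*e) * 2) e := by
    simpa using ((hasDerivAt_id e).const_mul 2).exp
  have := h1.mul h2
  exact this.congr_deriv (by ring)

private lemma core (Tstar : ℝ) (w : ℝ → ℝ → ℝ → ℝ)
    (hsmooth : ContDiff ℝ 2 (fun p : ℝ × ℝ × ℝ => w p.1 p.2.1 p.2.2))
    (heq : ∀ η ∈ Set.Ioo (0:ℝ) 1, ∀ ξ : ℝ, ∀ t ∈ Set.Ioo (0:ℝ) Tstar,
      -(deriv (fun s => w η ξ s) t) - η * deriv (fun x => w η x t) ξ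
        + (w η ξ t)^2 * deriv (deriv (fun e => w e ξ t)) η = 0)
    (hneu : ∀ ξ : ℝ, ∀ t ∈ Set.Ico (0:ℝ) Tstar, deriv (fun e => w e ξ t) 0 = 0)
    (T' Rfar Rb : ℝ) (hT'0 : 0 < T') (hT'T : T' < Tstar)
    (hRfar0 : 0 ≤ Rfar) (hRfar : Rfar + 1 ≤ Rb)
    (A Bc A' B' : ℝ → ℝ)
    (hAd : ∀ t, HasDerivAt A (A' t) t) (hBd : ∀ t, HasDerivAt Bc (B' t) t)
    (hApos : ∀ t ∈ Set.Icc (0:ℝ) T', 0 < A t)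
    (G : ℝ → ℝ → ℝ → ℝ)
    (hG : ∀ η ξ t, G η ξ t = w η ξ t - A t * ((1 - η) * Real.exp (2 * η)) + Bc t)
    (P : ℝ → ℝ → ℝ → Prop)
    (hP : ∀ η ∈ Set.Icc (0:ℝ) 1, ∀ ξ ∈ Set.Icc (-Rb) Rb, ∀ t ∈ Set.Icc (0:ℝ) T',
      P η t (w η ξ t))
    (hkey : ∀ η ∈ Set.Ioo (0:ℝ) 1, ∀ t ∈ Set.Ioc (0:ℝ) T', ∀ v : ℝ, P η t v →
      A' t * ((1 - η) * Real.exp (2 * η)) - B' t < v ^ 2 * (A t * (-4 * η * Real.exp (2 * η))))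
    (m : ℝ)
    (hm0 : ∀ η ∈ Set.Icc (0:ℝ) 1, ∀ ξ ∈ Set.Icc (-Rb) Rb, m < G η ξ 0)
    (hm1 : ∀ ξ ∈ Set.Icc (-Rb) Rb, ∀ t ∈ Set.Icc (0:ℝ) T', m < G 1 ξ t)
    (hmfar : ∀ η ∈ Set.Icc (0:ℝ) 1, ∀ ξ ∈ Set.Icc (-Rb) Rb, Rfar ≤ |ξ| →
      ∀ t ∈ Set.Icc (0:ℝ) T', m < G η ξ t) :
    ∀ η ∈ Set.Icc (0:ℝ) 1, ∀ ξ ∈ Set.Icc (-Rb) Rb, ∀ t ∈ Set.Icc (0:ℝ) T', m < G η ξ t := by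
  have hRb1 : (1:ℝ) ≤ Rb := by linarith
  have hAc : Continuous A := by
    rw [continuous_iff_continuousAt]; exact fun t => (hAd t).continuousAt
  have hBcc : Continuous Bc := by
    rw [continuous_iff_continuousAt]; exact fun t => (hBd t).continuousAt
  -- slice smoothness
  have hslη : ∀ ξ t : ℝ, ContDiff ℝ 2 (fun e => w e ξ t) := by
    intro ξ t
    have hinner : ContDiff ℝ 2 (fun e : ℝ => ((e, ξ, t) : ℝ × ℝ × ℝ)) :=
      contDiff_id.prodMk contDiff_const
    exact hsmooth.comp hinner
  have hslξ : ∀ η t : ℝ, ContDiff ℝ 2 (fun x => w η x t) := by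
    intro η t
    have hinner : ContDiff ℝ 2 (fun x : ℝ => ((η, x, t) : ℝ × ℝ × ℝ)) :=
      contDiff_const.prodMk (contDiff_id.prodMk contDiff_const)
    exact hsmooth.comp hinner
  have hslt : ∀ η ξ : ℝ, ContDiff ℝ 2 (fun s => w η ξ s) := by
    intro η ξ
    have hinner : ContDiff ℝ 2 (fun s : ℝ => ((η, ξ, s) : ℝ × ℝ × ℝ)) :=
      contDiff_const.prodMk (contDiff_const.prodMk contDiff_id)
    exact hsmooth.comp hinner
  set D : Set (ℝ × ℝ × ℝ) := Set.Icc 0 1 ×ˢ Set.Icc (-Rb) Rb ×ˢ Set.Icc 0 T' with hD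
  have hDc : IsCompact D := isCompact_Icc.prod (isCompact_Icc.prod isCompact_Icc)
  have hDne : D.Nonempty := by
    have h0 : (0:ℝ) ∈ Set.Icc (-Rb) Rb := by constructor <;> linarith
    exact ⟨(0, 0, 0), Set.mk_mem_prod (by norm_num)
      (Set.mk_mem_prod h0 ⟨le_refl 0, le_of_lt hT'0⟩)⟩
  have hGfun : (fun p : ℝ × ℝ × ℝ => G p.1 p.2.1 p.2.2)
      = fun p : ℝ × ℝ × ℝ => w p.1 p.2.1 p.2.2
        - A p.2.2 * ((1 - p.1) * Real.exp (2 * p.1)) + Bc p.2.2 := by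
    funext p; exact hG p.1 p.2.1 p.2.2
  have hGc : ContinuousOn (fun p : ℝ × ℝ × ℝ => G p.1 p.2.1 p.2.2) D := by
    rw [hGfun]
    refine Continuous.continuousOn ?_
    apply Continuous.add
    · apply Continuous.sub hsmooth.continuous
      apply Continuous.mul (hAc.comp (continuous_snd.comp continuous_snd))
      apply Continuous.mul
      · exact continuous_const.sub continuous_fst
      · exact Real.continuous_exp.comp (continuous_const.mul continuous_fst)
    · exact hBcc.comp (continuous_snd.comp continuous_snd)
  obtain ⟨p, hpD, hpmin⟩ := hDc.exists_isMinOn hDne hGc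
  obtain ⟨η₀, ξ₀, t₀⟩ := p
  obtain ⟨hη₀, hξ₀, ht₀⟩ := hpD
  simp only [Set.mem_Icc] at hη₀ hξ₀ ht₀
  have hmin : ∀ η ∈ Set.Icc (0:ℝ) 1, ∀ ξ ∈ Set.Icc (-Rb) Rb, ∀ t ∈ Set.Icc (0:ℝ) T',
      G η₀ ξ₀ t₀ ≤ G η ξ t := by
    intro η hη ξ hξ t ht
    exact hpmin (Set.mk_mem_prod hη (Set.mk_mem_prod hξ ht))
  suffices hmain : m < G η₀ ξ₀ t₀ by
    intro η hη ξ hξ t ht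
    exact lt_of_lt_of_le hmain (hmin η hη ξ hξ t ht)
  have hη₀m : η₀ ∈ Set.Icc (0:ℝ) 1 := Set.mem_Icc.mpr hη₀
  have hξ₀m : ξ₀ ∈ Set.Icc (-Rb) Rb := Set.mem_Icc.mpr hξ₀
  have ht₀m : t₀ ∈ Set.Icc (0:ℝ) T' := Set.mem_Icc.mpr ht₀
  by_cases ht00 : t₀ = 0
  · subst ht00; exact hm0 η₀ hη₀m ξ₀ hξ₀m
  by_cases hfar : Rfar ≤ |ξ₀|
  · exact hmfar η₀ hη₀m ξ₀ hξ₀m hfar t₀ ht₀m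
  by_cases hη1 : η₀ = 1
  · subst hη1; exact hm1 ξ₀ hξ₀m t₀ ht₀m
  exfalso
  push_neg at hfar
  have hη₀1 : η₀ < 1 := lt_of_le_of_ne hη₀.2 hη1
  have ht₀0 : 0 < t₀ := lt_of_le_of_ne ht₀.1 (Ne.symm ht00)
  have ht₀T : t₀ < Tstar := lt_of_le_of_lt ht₀.2 hT'T
  have ht₀Ico : t₀ ∈ Set.Ico (0:ℝ) Tstar := ⟨ht₀.1, ht₀T⟩
  -- the η-slice function and its rewriting
  have hGsliceη : ∀ t : ℝ, (fun e => G e ξ₀ t)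
      = fun e => (w e ξ₀ t - A t * ((1 - e) * Real.exp (2 * e))) + Bc t := by
    intro t; funext e; rw [hG]
  by_cases hη0 : η₀ = 0
  · -- Neumann boundary: slope must be ≥ 0, but it is -A t₀ < 0
    subst hη0
    have hwd : DifferentiableAt ℝ (fun e => w e ξ₀ t₀) 0 :=
      ((hslη ξ₀ t₀).differentiable (by norm_num)).differentiableAt
    have hF : HasDerivAt (fun e => G e ξ₀ t₀)
        (deriv (fun e => w e ξ₀ t₀) 0 - A t₀ * ((1 - 2*0) * Real.exp (2*0))) 0 := by
      rw [hGsliceη t₀]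
      exact ((hwd.hasDerivAt.sub ((phi_hasDeriv 0).const_mul (A t₀))).add_const (Bc t₀))
    have hge : 0 ≤ deriv (fun e => w e ξ₀ t₀) 0 - A t₀ * ((1 - 2*0) * Real.exp (2*0)) := by
      refine deriv_nonneg_of_min_left (by norm_num : (0:ℝ) < 1) hF ?_
      intro y hy
      exact hmin y hy ξ₀ hξ₀m t₀ ht₀m
    rw [hneu ξ₀ t₀ ht₀Ico] at hge
    have := hApos t₀ ht₀m
    norm_num at hge
    linarith
  have hη₀0 : 0 < η₀ := lt_of_le_of_ne hη₀.1 (Ne.symm hη0)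
  -- ξ derivative vanishes
  have hξloc : IsLocalMin (fun x => G η₀ x t₀) ξ₀ := by
    have hmem : Set.Ioo (ξ₀ - 1) (ξ₀ + 1) ∈ nhds ξ₀ :=
      Ioo_mem_nhds (by linarith) (by linarith)
    refine Filter.eventually_of_mem hmem ?_
    intro x hx
    have hxm : x ∈ Set.Icc (-Rb) Rb := by
      have h1 : |ξ₀| < Rfar := hfar
      have := abs_le.mp (le_of_lt h1)
      constructor <;> [linarith [hx.1]; linarith [hx.2]]
    exact hmin η₀ hη₀m x hxm t₀ ht₀m
  have hxiw : deriv (fun x => w η₀ x t₀) ξ₀ = 0 := by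
    have h0 := hξloc.deriv_eq_zero
    have hrw : (fun x => w η₀ x t₀)
        = fun x => (fun x' => G η₀ x' t₀) x + (A t₀ * ((1 - η₀) * Real.exp (2 * η₀)) - Bc t₀) := by
      funext x; simp only [hG]; ring
    rw [hrw, deriv_add_const, h0]
  -- time derivative sign
  have hwtd : DifferentiableAt ℝ (fun s => w η₀ ξ₀ s) t₀ :=
    ((hslt η₀ ξ₀).differentiable (by norm_num)).differentiableAt
  have htd : HasDerivAt (fun s => G η₀ ξ₀ s)
      (deriv (fun s => w η₀ ξ₀ s) t₀ - A' t₀ * ((1 - η₀) * Real.exp (2 * η₀)) + B' t₀) t₀ := by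
    have hrw : (fun s => G η₀ ξ₀ s)
        = fun s => w η₀ ξ₀ s - A s * ((1 - η₀) * Real.exp (2 * η₀)) + Bc s := by
      funext s; rw [hG]
    rw [hrw]
    exact (hwtd.hasDerivAt.sub ((hAd t₀).mul_const _)).add (hBd t₀)
  have htle : deriv (fun s => w η₀ ξ₀ s) t₀
      - A' t₀ * ((1 - η₀) * Real.exp (2 * η₀)) + B' t₀ ≤ 0 := by
    refine deriv_nonpos_of_min_right ht₀0 htd ?_
    intro s hs
    exact hmin η₀ hη₀m ξ₀ hξ₀m s ⟨hs.1, le_trans hs.2 ht₀.2⟩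
  -- second derivative in η
  set u : ℝ → ℝ := fun e => w e ξ₀ t₀ with hu
  have huc2 : ContDiff ℝ 2 u := hslη ξ₀ t₀
  have hud : Differentiable ℝ u := huc2.differentiable (by norm_num)
  have hu1 : Differentiable ℝ (deriv u) := by
    have := (contDiff_succ_iff_deriv (n := 1)).mp (by exact_mod_cast huc2)
    exact this.2.2.differentiable one_ne_zero
  set F : ℝ → ℝ := fun e => (u e - A t₀ * ((1 - e) * Real.exp (2 * e))) + Bc t₀ with hF
  have hFc2 : ContDiff ℝ 2 F := by
    refine ContDiff.add ?_ contDiff_const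
    refine huc2.sub ?_
    refine ContDiff.mul contDiff_const ?_
    exact (contDiff_const.sub contDiff_id).mul ((contDiff_const.mul contDiff_id).exp)
  have hFloc : IsLocalMin F η₀ := by
    have hmem : Set.Icc (0:ℝ) 1 ∈ nhds η₀ := Icc_mem_nhds hη₀0 hη₀1
    refine Filter.eventually_of_mem hmem ?_
    intro e he
    have h1 : G η₀ ξ₀ t₀ ≤ G e ξ₀ t₀ := hmin e he ξ₀ hξ₀m t₀ ht₀m
    rw [hG, hG] at h1
    simp only [hF, hu]
    linarith
  have h2nd : 0 ≤ deriv (deriv F) η₀ := second_deriv_nonneg_of_isLocalMin hFc2 hFloc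
  have hF1 : deriv F = fun e => deriv u e - A t₀ * ((1 - 2*e) * Real.exp (2*e)) := by
    funext e
    exact (((hud e).hasDerivAt.sub ((phi_hasDeriv e).const_mul (A t₀))).add_const (Bc t₀)).deriv
  have hF2 : deriv (deriv F) η₀
      = deriv (deriv u) η₀ - A t₀ * (-4*η₀ * Real.exp (2*η₀)) := by
    rw [hF1]
    exact ((hu1 η₀).hasDerivAt.sub ((phi'_hasDeriv η₀).const_mul (A t₀))).deriv
  rw [hF2] at h2nd
  -- the equation
  have heqp := heq η₀ ⟨hη₀0, hη₀1⟩ ξ₀ t₀ ⟨ht₀0, ht₀T⟩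
  rw [hxiw] at heqp
  have hkk := hkey η₀ ⟨hη₀0, hη₀1⟩ t₀ ⟨ht₀0, ht₀.2⟩ (w η₀ ξ₀ t₀)
    (hP η₀ hη₀m ξ₀ hξ₀m t₀ ht₀m)
  have hmul : (w η₀ ξ₀ t₀)^2 * (A t₀ * (-4*η₀ * Real.exp (2*η₀)))
      ≤ (w η₀ ξ₀ t₀)^2 * deriv (deriv u) η₀ := by
    apply mul_le_mul_of_nonneg_left _ (sq_nonneg _)
    linarith
  have hkey2 : A' t₀ * ((1 - η₀) * Real.exp (2 * η₀)) - B' t₀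
      < (w η₀ ξ₀ t₀)^2 * (A t₀ * (-4 * η₀ * Real.exp (2 * η₀))) := hkk
  have heqp' : deriv (fun s => w η₀ ξ₀ s) t₀
      = (w η₀ ξ₀ t₀)^2 * deriv (deriv u) η₀ := by
    simp only [hu] at heqp ⊢
    linarith
  rw [heqp'] at htle
  nlinarith [hmul, hkey2, htle]
set_option maxHeartbeats 1000000 in
theorem crocco_lower_bound (Tstar c C : ℝ) (hT : 0 < Tstar) (hc : 0 < c) (hcC : c ≤ C)
    (w : ℝ → ℝ → ℝ → ℝ)
    (hsmooth : ContDiff ℝ 2 (fun p : ℝ × ℝ × ℝ => w p.1 p.2.1 p.2.2))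
    (heq : ∀ η ∈ Set.Ioo (0:ℝ) 1, ∀ ξ : ℝ, ∀ t ∈ Set.Ioo (0:ℝ) Tstar,
      -(deriv (fun s => w η ξ s) t) - η * deriv (fun x => w η x t) ξ
        + (w η ξ t)^2 * deriv (deriv (fun e => w e ξ t)) η = 0)
    (hneu : ∀ ξ : ℝ, ∀ t ∈ Set.Ico (0:ℝ) Tstar, deriv (fun e => w e ξ t) 0 = 0)
    (hdir : ∀ ξ : ℝ, ∀ t ∈ Set.Ico (0:ℝ) Tstar, w 1 ξ t = 0)
    (hinit : ∀ η ∈ Set.Icc (0:ℝ) 1, ∀ ξ : ℝ,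
      c * (1 - η) ≤ w η ξ 0 ∧ w η ξ 0 ≤ C * (1 - η))
    (hinf : ∀ ε > (0:ℝ), ∃ R : ℝ, ∀ η ∈ Set.Icc (0:ℝ) 1, ∀ ξ : ℝ,
      ∀ t ∈ Set.Ico (0:ℝ) Tstar, R ≤ |ξ| →
        c * (1 - η) - ε ≤ w η ξ t ∧ w η ξ t ≤ C * (1 - η) + ε)
    (hupper : ∀ η ∈ Set.Icc (0:ℝ) 1, ∀ ξ : ℝ, ∀ t ∈ Set.Ico (0:ℝ) Tstar,
      w η ξ t ≤ C * (1 - η)) :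
    ∃ c₁ > (0:ℝ), ∀ η ∈ Set.Icc (0:ℝ) 1, ∀ ξ : ℝ, ∀ t ∈ Set.Ico (0:ℝ) Tstar,
      c₁ * (1 - η) ≤ w η ξ t := by
  have hexp2 : (1:ℝ) ≤ Real.exp 2 := Real.one_le_exp (by norm_num)
  -- STEP 1 : nonnegativity of w
  have hnonneg : ∀ η ∈ Set.Icc (0:ℝ) 1, ∀ ξ : ℝ, ∀ t ∈ Set.Ico (0:ℝ) Tstar,
      0 ≤ w η ξ t := by
    intro η hη ξ t ht
    have hφ0 : (0:ℝ) ≤ (1 - η) * Real.exp (2 * η) :=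
      mul_nonneg (by linarith [hη.2]) (le_of_lt (Real.exp_pos _))
    -- choose T'
    set T' : ℝ := max (Tstar/2) t with hT'def
    have hT'0 : 0 < T' := lt_of_lt_of_le (by linarith) (le_max_left _ _)
    have hT'T : T' < Tstar := max_lt (by linarith) ht.2
    have htT' : t ∈ Set.Icc 0 T' := ⟨ht.1, le_max_right _ _⟩
    suffices hsuff : ∀ ε' > (0:ℝ), -ε' ≤ w η ξ t by
      by_contra hcon
      push_neg at hcon
      have := hsuff (-(w η ξ t)/2) (by linarith)
      linarith
    intro ε' hε'
    obtain ⟨R, hR⟩ := hinf ε' hε'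
    set Rfar : ℝ := |R| with hRfardef
    set Rb : ℝ := |R| + |ξ| + 1 with hRbdef
    have hRfar0 : 0 ≤ Rfar := abs_nonneg R
    have hRfarRb : Rfar + 1 ≤ Rb := by
      simp only [hRbdef, hRfardef]; linarith [abs_nonneg ξ]
    have hξm : ξ ∈ Set.Icc (-Rb) Rb := by
      refine abs_le.mp ?_
      simp only [hRbdef]; linarith [abs_nonneg R, le_abs_self ξ, abs_nonneg ξ]
    -- bound on |w| on the compact box
    set D : Set (ℝ × ℝ × ℝ) := Set.Icc 0 1 ×ˢ Set.Icc (-Rb) Rb ×ˢ Set.Icc 0 T' with hD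
    have hDc : IsCompact D := isCompact_Icc.prod (isCompact_Icc.prod isCompact_Icc)
    have hDne : D.Nonempty := by
      have h0 : (0:ℝ) ∈ Set.Icc (-Rb) Rb := by
        constructor <;> [linarith [abs_nonneg R, abs_nonneg ξ]; linarith [abs_nonneg R, abs_nonneg ξ]]
      exact ⟨(0, 0, 0), Set.mk_mem_prod (by norm_num)
        (Set.mk_mem_prod h0 ⟨le_refl 0, le_of_lt hT'0⟩)⟩
    obtain ⟨pm, hpmD, hpmax⟩ := hDc.exists_isMaxOn hDne
      (hsmooth.continuous.abs.continuousOn)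
    set Wb : ℝ := |w pm.1 pm.2.1 pm.2.2| with hWb
    have hW : ∀ η' ∈ Set.Icc (0:ℝ) 1, ∀ ξ' ∈ Set.Icc (-Rb) Rb, ∀ t' ∈ Set.Icc (0:ℝ) T',
        |w η' ξ' t'| ≤ Wb := by
      intro η' hη' ξ' hξ' t' ht'
      exact hpmax (Set.mk_mem_prod hη' (Set.mk_mem_prod hξ' ht'))
    have hWb0 : 0 ≤ Wb := abs_nonneg _
    set K : ℝ := 4 * Real.exp 2 * Wb^2 + 1 with hK
    have hK1 : 1 ≤ K := by nlinarith [sq_nonneg Wb]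
    have hδstep : ∀ δ > (0:ℝ), -ε' - δ * (Real.exp 2 + Real.exp (K*t)) ≤ w η ξ t := by
      intro δ hδ0
      have hcore := core Tstar w hsmooth heq hneu T' Rfar Rb hT'0 hT'T hRfar0 hRfarRb
        (fun _ => δ) (fun s => δ * (Real.exp (K*s) - 1)) (fun _ => 0)
        (fun s => δ * (Real.exp (K*s) * K))
        (fun s => hasDerivAt_const s δ)
        (fun s => by
          have h1 : HasDerivAt (fun s : ℝ => Real.exp (K*s)) (Real.exp (K*s) * K) s := by
            simpa using ((hasDerivAt_id s).const_mul K).exp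
          simpa using (h1.sub_const 1).const_mul δ)
        (fun s _ => hδ0)
        (fun η' ξ' t' => w η' ξ' t' - δ * ((1 - η') * Real.exp (2 * η')) + δ * (Real.exp (K*t') - 1))
        (fun _ _ _ => rfl)
        (fun η' t' v => |v| ≤ Wb)
        (fun η' hη' ξ' hξ' t' ht' => hW η' hη' ξ' hξ' t' ht')
        ?hkey (-ε' - δ * Real.exp 2 - δ) ?hm0 ?hm1 ?hmfar η hη ξ hξm t htT'
      case hkey =>
        intro η' hη' t' ht' v hv
        replace hv : |v| ≤ Wb := hv
        beta_reduce
        have hv2 : v^2 ≤ Wb^2 := by nlinarith [sq_abs v, abs_nonneg v]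
        have he1 : Real.exp (2*η') ≤ Real.exp 2 :=
          Real.exp_le_exp.mpr (by linarith [hη'.2])
        have he2 : (1:ℝ) ≤ Real.exp (K*t') :=
          Real.one_le_exp (by nlinarith [ht'.1, hK1])
        have m1 : v^2 * η' ≤ Wb^2 := by nlinarith [sq_nonneg v, hη'.1, hη'.2]
        have hb1 : v^2 * η' * Real.exp (2*η') ≤ Wb^2 * Real.exp 2 :=
          mul_le_mul m1 he1 (le_of_lt (Real.exp_pos _)) (sq_nonneg Wb)
        have hb2 : δ * K ≤ δ * (Real.exp (K*t') * K) := by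
          have h4 := mul_nonneg (mul_nonneg (le_of_lt hδ0) (le_trans zero_le_one hK1))
            (sub_nonneg.mpr he2)
          nlinarith [h4]
        have hKδ : δ * K = 4 * (δ * (Wb^2 * Real.exp 2)) + δ := by rw [hK]; ring
        nlinarith [mul_le_mul_of_nonneg_left hb1 (le_of_lt hδ0), hb2, hKδ, hδ0]
      case hm0 =>
        intro η' hη' ξ' hξ'
        beta_reduce
        have h1 := (hinit η' hη' ξ').1
        have hφe' : (1 - η') * Real.exp (2 * η') ≤ Real.exp 2 := by
          have := Real.exp_le_exp.mpr (show 2*η' ≤ 2 by linarith [hη'.2])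
          nlinarith [Real.exp_pos (2*η'), hη'.1, hη'.2]
        have hcη : 0 ≤ c * (1 - η') := mul_nonneg (le_of_lt hc) (by linarith [hη'.2])
        simp only [mul_zero, Real.exp_zero]
        have h5 := mul_le_mul_of_nonneg_left hφe' (le_of_lt hδ0)
        nlinarith [h1, hcη, h5, hδ0, hε']
      case hm1 =>
        intro ξ' hξ' t' ht'
        beta_reduce
        have h0 : w 1 ξ' t' = 0 := hdir ξ' t' ⟨ht'.1, lt_of_le_of_lt ht'.2 hT'T⟩
        have he2 : (1:ℝ) ≤ Real.exp (K*t') :=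
          Real.one_le_exp (by nlinarith [ht'.1, hK1])
        rw [h0]
        have h5 : ((1:ℝ) - 1) * Real.exp (2 * 1) = 0 := by norm_num
        rw [h5, mul_zero]
        have h6 : 0 ≤ δ * (Real.exp (K*t') - 1) :=
          mul_nonneg (le_of_lt hδ0) (by linarith)
        nlinarith [hδ0, hε', mul_pos hδ0 (Real.exp_pos 2), h6]
      case hmfar =>
        intro η' hη' ξ' hξ' hfar t' ht'
        beta_reduce
        have hRξ : R ≤ |ξ'| := le_trans (le_abs_self R) hfar
        have h1 := (hR η' hη' ξ' t' ⟨ht'.1, lt_of_le_of_lt ht'.2 hT'T⟩ hRξ).1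
        have hφe' : (1 - η') * Real.exp (2 * η') ≤ Real.exp 2 := by
          have := Real.exp_le_exp.mpr (show 2*η' ≤ 2 by linarith [hη'.2])
          nlinarith [Real.exp_pos (2*η'), hη'.1, hη'.2]
        have hcη : 0 ≤ c * (1 - η') := mul_nonneg (le_of_lt hc) (by linarith [hη'.2])
        have he2 : (1:ℝ) ≤ Real.exp (K*t') :=
          Real.one_le_exp (by nlinarith [ht'.1, hK1])
        have h5 := mul_le_mul_of_nonneg_left hφe' (le_of_lt hδ0)
        have h6 : 0 ≤ δ * (Real.exp (K*t') - 1) :=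
          mul_nonneg (le_of_lt hδ0) (by linarith)
        nlinarith [h1, hcη, h5, h6, hδ0, hε']
      -- use the conclusion
      beta_reduce at hcore
      have h7 : 0 ≤ δ * ((1 - η) * Real.exp (2 * η)) := mul_nonneg (le_of_lt hδ0) hφ0
      nlinarith [hcore, h7]
    -- let δ → 0
    by_contra hcon
    push_neg at hcon
    set M : ℝ := Real.exp 2 + Real.exp (K*t) with hM
    have hM0 : 0 < M := by positivity
    have hδ0 : 0 < (-ε' - w η ξ t) / (2*M) := by
      apply div_pos (by linarith) (by linarith)
    have hstep := hδstep _ hδ0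
    have h3 : ((-ε' - w η ξ t) / (2*M)) * M = (-ε' - w η ξ t)/2 := by
      field_simp
    nlinarith [hstep, h3]
  -- STEP 2 : the barrier lower bound
  set β : ℝ := 4 * Real.exp 2 * C^2 + 1 with hβ
  have hβ0 : 0 < β := by nlinarith [sq_nonneg C]
  set α : ℝ := c * Real.exp (-2) with hα
  have hα0 : 0 < α := mul_pos hc (Real.exp_pos _)
  refine ⟨α * Real.exp (-(β * Tstar)), by positivity, ?_⟩
  intro η hη ξ t ht
  set T' : ℝ := max (Tstar/2) t with hT'def
  have hT'0 : 0 < T' := lt_of_lt_of_le (by linarith) (le_max_left _ _)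
  have hT'T : T' < Tstar := max_lt (by linarith) ht.2
  have htT' : t ∈ Set.Icc 0 T' := ⟨ht.1, le_max_right _ _⟩
  have hbar : ∀ ε' > (0:ℝ),
      -ε' < w η ξ t - α * Real.exp (-β * t) * ((1 - η) * Real.exp (2 * η)) + 0 := by
    intro ε' hε'
    obtain ⟨R, hR⟩ := hinf (ε'/2) (by linarith)
    set Rfar : ℝ := |R| with hRfardef
    set Rb : ℝ := |R| + |ξ| + 1 with hRbdef
    have hRfar0 : 0 ≤ Rfar := abs_nonneg R
    have hRfarRb : Rfar + 1 ≤ Rb := by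
      simp only [hRbdef, hRfardef]; linarith [abs_nonneg ξ]
    have hξm : ξ ∈ Set.Icc (-Rb) Rb := by
      refine abs_le.mp ?_
      simp only [hRbdef]; linarith [abs_nonneg R, le_abs_self ξ, abs_nonneg ξ]
    have hαφle : ∀ η' ∈ Set.Icc (0:ℝ) 1,
        α * ((1 - η') * Real.exp (2 * η')) ≤ c * (1 - η') := by
      intro η' hη'
      have h1 : Real.exp (-2) * Real.exp (2*η') ≤ 1 := by
        rw [← Real.exp_add]
        exact Real.exp_le_one_iff.mpr (by linarith [hη'.2])
      have h2 : 0 ≤ 1 - η' := by linarith [hη'.2]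
      rw [hα]
      nlinarith [mul_le_mul_of_nonneg_left h1 (mul_nonneg (le_of_lt hc) h2)]
    have hcore := core Tstar w hsmooth heq hneu T' Rfar Rb hT'0 hT'T hRfar0 hRfarRb
      (fun s => α * Real.exp (-β * s)) (fun _ => 0)
      (fun s => α * (Real.exp (-β * s) * -β)) (fun _ => 0)
      (fun s => by
        have h1 : HasDerivAt (fun s : ℝ => Real.exp (-β * s)) (Real.exp (-β * s) * -β) s := by
          simpa using ((hasDerivAt_id s).const_mul (-β)).exp
        exact h1.const_mul α)
      (fun s => hasDerivAt_const s 0)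
      (fun s _ => mul_pos hα0 (Real.exp_pos _))
      (fun η' ξ' t' => w η' ξ' t' - α * Real.exp (-β * t') * ((1 - η') * Real.exp (2 * η')) + 0)
      (fun _ _ _ => rfl)
      (fun η' t' v => 0 ≤ v ∧ v ≤ C * (1 - η'))
      (fun η' hη' ξ' hξ' t' ht' =>
        ⟨hnonneg η' hη' ξ' t' ⟨ht'.1, lt_of_le_of_lt ht'.2 hT'T⟩,
         hupper η' hη' ξ' t' ⟨ht'.1, lt_of_le_of_lt ht'.2 hT'T⟩⟩)
      ?hkey (-ε') ?hm0 ?hm1 ?hmfar η hη ξ hξm t htT'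
    case hkey =>
      intro η' hη' t' ht' v hv
      replace hv : 0 ≤ v ∧ v ≤ C * (1 - η') := hv
      beta_reduce
      have hv2 : v^2 ≤ C^2 * (1-η')^2 := by nlinarith [hv.1, hv.2]
      have hkeylin : 4 * v^2 * η' < β * (1 - η') := by
        have h1 : 4 * v^2 * η' ≤ 4 * C^2 * (1-η')^2 := by
          nlinarith [hη'.1, hη'.2, sq_nonneg v]
        have h2 : 4 * C^2 * (1-η')^2 ≤ 4 * C^2 * (1-η') := by
          nlinarith [sq_nonneg C, hη'.1, hη'.2]
        have h3 : 4 * C^2 * (1-η') < β * (1-η') := by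
          rw [hβ]
          nlinarith [sq_nonneg C, hη'.2, hη'.1, hexp2]
        linarith
      have hpos : 0 < α * Real.exp (-β * t') * Real.exp (2*η') := by positivity
      nlinarith [mul_lt_mul_of_pos_left hkeylin hpos]
    case hm0 =>
      intro η' hη' ξ' hξ'
      beta_reduce
      have h1 := (hinit η' hη' ξ').1
      have h2 := hαφle η' hη'
      have hz : -β * 0 = 0 := by ring
      rw [hz, Real.exp_zero]
      have hφ0' : (0:ℝ) ≤ (1 - η') * Real.exp (2 * η') :=
        mul_nonneg (by linarith [hη'.2]) (le_of_lt (Real.exp_pos _))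
      nlinarith [h1, h2, hε']
    case hm1 =>
      intro ξ' hξ' t' ht'
      beta_reduce
      have h0 : w 1 ξ' t' = 0 := hdir ξ' t' ⟨ht'.1, lt_of_le_of_lt ht'.2 hT'T⟩
      rw [h0]
      have h5 : ((1:ℝ) - 1) * Real.exp (2 * 1) = 0 := by norm_num
      rw [h5, mul_zero]
      linarith
    case hmfar =>
      intro η' hη' ξ' hξ' hfar t' ht'
      beta_reduce
      have hRξ : R ≤ |ξ'| := le_trans (le_abs_self R) hfar
      have h1 := (hR η' hη' ξ' t' ⟨ht'.1, lt_of_le_of_lt ht'.2 hT'T⟩ hRξ).1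
      have h2 := hαφle η' hη'
      have hφ0' : (0:ℝ) ≤ (1 - η') * Real.exp (2 * η') :=
        mul_nonneg (by linarith [hη'.2]) (le_of_lt (Real.exp_pos _))
      have he : Real.exp (-β * t') ≤ 1 :=
        Real.exp_le_one_iff.mpr (by nlinarith [ht'.1, hβ0])
      have h6 := mul_le_mul_of_nonneg_right he hφ0'
      have h3 : α * Real.exp (-β * t') * ((1 - η') * Real.exp (2 * η'))
          ≤ α * ((1 - η') * Real.exp (2 * η')) := by
        nlinarith [mul_le_mul_of_nonneg_left h6 (le_of_lt hα0)]
      linarith [h1, h2, h3, hε']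
    -- conclusion of core
    beta_reduce at hcore
    linarith [hcore]
  -- from hbar for all ε', get the bound
  have hfinal : α * Real.exp (-β * t) * ((1 - η) * Real.exp (2 * η)) ≤ w η ξ t := by
    by_contra hcon
    push_neg at hcon
    have := hbar ((α * Real.exp (-β * t) * ((1 - η) * Real.exp (2 * η)) - w η ξ t)/2)
      (by linarith)
    linarith
  have he1 : Real.exp (-(β * Tstar)) ≤ Real.exp (-β * t) := by
    apply Real.exp_le_exp.mpr
    nlinarith [ht.2, hβ0, ht.1]
  have he2 : (1:ℝ) ≤ Real.exp (2 * η) := Real.one_le_exp (by linarith [hη.1])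
  have hφ0 : (0:ℝ) ≤ 1 - η := by linarith [hη.2]
  have hA1 : 0 < α * Real.exp (-β * t) := mul_pos hα0 (Real.exp_pos _)
  have h8 : (1-η) * 1 ≤ (1-η) * Real.exp (2*η) := mul_le_mul_of_nonneg_left he2 hφ0
  have h9 : α * Real.exp (-β*t) * ((1-η)*1) ≤ α * Real.exp (-β*t) * ((1-η)*Real.exp (2*η)) :=
    mul_le_mul_of_nonneg_left h8 (le_of_lt hA1)
  have h10 : α * Real.exp (-(β*Tstar)) * (1-η) ≤ α * Real.exp (-β*t) * (1-η) := by
    have h11 := mul_le_mul_of_nonneg_left he1 (le_of_lt hα0)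
    exact mul_le_mul_of_nonneg_right h11 hφ0
  nlinarith [hfinal, h9, h10]
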